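/- Let d ≥ 11, γ = (d - √(d^2 - 12d + 24))/2, α = γ - 2 and β > 0. Then the function φ(y) = (2β) y^{2-γ} - 4(d/2 - γ + 1) y^{-γ} on (0,∞) satisfies ℒ_∞^β φ = 2β(α/2 - 1) φ, where ℒ_∞^β φ = φ'' + ((d+1)/y) φ' - β(y φ' + 2φ) + (3(d-2)/y^2) φ. -/

import Mathlib

/-- For `d ≥ 11`, `γ = (d - √(d^2-12d+24))/2`, `α = γ - 2`, `β > 0`, the function
`φ(y) = (2β) y^{2-γ} - 4(d/2 - γ + 1) y^{-γ}` on `(0,∞)` satisfies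
`ℒ_∞^β φ = 2β(α/2 - 1) φ`. -/
theorem stmt4 (d β γ α : ℝ) (hd : 11 ≤ d) (hβ : 0 < β)
    (hγ : γ = (d - Real.sqrt (d ^ 2 - 12 * d + 24)) / 2)
    (hα : α = γ - 2)
    (φ : ℝ → ℝ)
    (hφ : ∀ y : ℝ, φ y = (2 * β) * y ^ (2 - γ) - 4 * (d / 2 - γ + 1) * y ^ (-γ)) :
    ∀ y : ℝ, 0 < y →
      deriv (deriv φ) y + ((d + 1) / y) * deriv φ y
        - β * (y * deriv φ y + 2 * φ y) + (3 * (d - 2) / y ^ 2) * φ y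
        = 2 * β * (α / 2 - 1) * φ y := by
  have hD : (0:ℝ) ≤ d ^ 2 - 12 * d + 24 := by nlinarith
  have hs : Real.sqrt (d ^ 2 - 12 * d + 24) ^ 2 = d ^ 2 - 12 * d + 24 :=
    Real.sq_sqrt hD
  have hq : γ ^ 2 = d * γ - 3 * (d - 2) := by
    rw [hγ]; linear_combination hs / 4
  have hφ' : φ = fun y : ℝ => (2 * β) * y ^ (2 - γ) - 4 * (d / 2 - γ + 1) * y ^ (-γ) :=
    funext hφ
  set c : ℝ := 4 * (d / 2 - γ + 1) with hc
  set g : ℝ → ℝ := fun y : ℝ =>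
    2 * β * (2 - γ) * y ^ (1 - γ) + c * γ * y ^ (-γ - 1) with hg
  have hder : ∀ y : ℝ, 0 < y → HasDerivAt φ (g y) y := by
    intro y hy
    rw [hφ']
    have h1 : HasDerivAt (fun y : ℝ => y ^ (2 - γ)) ((2 - γ) * y ^ (2 - γ - 1)) y :=
      Real.hasDerivAt_rpow_const (Or.inl hy.ne')
    have h2 : HasDerivAt (fun y : ℝ => y ^ (-γ)) ((-γ) * y ^ (-γ - 1)) y :=
      Real.hasDerivAt_rpow_const (Or.inl hy.ne')
    have := (h1.const_mul (2 * β)).sub (h2.const_mul c)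
    convert this using 1
    · rfl
    · rfl
    · rfl
    rw [show (2 - γ - 1) = 1 - γ by ring]
    simp only [hg]; ring
  have hder2 : ∀ y : ℝ, 0 < y →
      HasDerivAt g (2 * β * (2 - γ) * (1 - γ) * y ^ (-γ)
        + c * γ * (-γ - 1) * y ^ (-γ - 2)) y := by
    intro y hy
    have h1 : HasDerivAt (fun y : ℝ => y ^ (1 - γ)) ((1 - γ) * y ^ (1 - γ - 1)) y :=
      Real.hasDerivAt_rpow_const (Or.inl hy.ne')
    have h2 : HasDerivAt (fun y : ℝ => y ^ (-γ - 1)) ((-γ - 1) * y ^ (-γ - 1 - 1)) y :=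
      Real.hasDerivAt_rpow_const (Or.inl hy.ne')
    have := (h1.const_mul (2 * β * (2 - γ))).add (h2.const_mul (c * γ))
    convert this using 1
    · rfl
    · rfl
    · rfl
    rw [show (1 - γ - 1) = -γ by ring, show (-γ - 1 - 1) = -γ - 2 by ring]
    ring
  intro y hy
  have hdφ : deriv φ y = g y := (hder y hy).deriv
  have hev : deriv φ =ᶠ[nhds y] g := by
    filter_upwards [Ioi_mem_nhds hy] with z hz
    exact (hder z hz).deriv
  have hdd : deriv (deriv φ) y =
      2 * β * (2 - γ) * (1 - γ) * y ^ (-γ) + c * γ * (-γ - 1) * y ^ (-γ - 2) := by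
    rw [hev.deriv_eq]; exact (hder2 y hy).deriv
  have e1 : y ^ (2 - γ) = y ^ 2 * y ^ (-γ) := by
    rw [show (2 - γ) = (2:ℝ) + (-γ) by ring, Real.rpow_add hy]
    norm_num
  have e2 : y ^ (1 - γ) = y * y ^ (-γ) := by
    rw [show (1 - γ) = (1:ℝ) + (-γ) by ring, Real.rpow_add hy, Real.rpow_one]
  have e3 : y ^ (-γ - 1) = y ^ (-γ) / y := by
    rw [Real.rpow_sub hy, Real.rpow_one]
  have e4 : y ^ (-γ - 2) = y ^ (-γ) / y ^ 2 := by
    rw [Real.rpow_sub hy]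
    norm_num
  rw [hdd, hdφ, hφ y, hα]
  simp only [hg, e1, e2, e3, e4]
  have hy' : y ≠ 0 := hy.ne'
  field_simp
  rw [hc]
  linear_combination (2 * β * y ^ 2 + 4 * γ - 2 * d - 4) * hq
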